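/- For all nonnegative integers n and real numbers m, r and x, applying the operator identity to the exponential function yields e^{-x}(mXD+r)^n e^x = \sum_{k=0}^n W_{m,r}(n,k) (mx)^k, i.e., the normal-ordered expansion of (mXD+r)^n evaluated on e^x equals D_{m,r}(n; mx) e^x. -/

import Mathlib

/-- The r-Whitney numbers of the second kind, defined by the triangular recurrence
`W m r n k = W m r (n-1) (k-1) + (m*k+r) * W m r (n-1) k`, with `W m r 0 0 = 1`
and vanishing for `k > n` (and for "k < 0", encoded by the `n+1, 0` case). -/
noncomputable def rWhitney (m r : ℝ) : ℕ → ℕ → ℝ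
  | 0, 0 => 1
  | 0, _ + 1 => 0
  | n + 1, 0 => r * rWhitney m r n 0
  | n + 1, k + 1 => rWhitney m r n k + (m * (k + 1) + r) * rWhitney m r n (k + 1)
/-- The r-Dowling polynomial: the sum over k ≤ n of `W m r n k * x^k`. -/
noncomputable def rDowling (m r : ℝ) (n : ℕ) (x : ℝ) : ℝ :=
  ∑ k ∈ Finset.range (n + 1), rWhitney m r n k * x ^ k

lemma rWhitney_eq_zero (m r : ℝ) : ∀ n k : ℕ, n < k → rWhitney m r n k = 0 := by
  intro n
  induction n with
  | zero =>
    intro k hk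
    match k, hk with
    | k + 1, _ => rfl
  | succ n ih =>
    intro k hk
    match k, hk with
    | k + 1, hk =>
      have h1 : n < k := by omega
      have h2 : n < k + 1 := by omega
      show rWhitney m r n k + (m * (k + 1) + r) * rWhitney m r n (k + 1) = 0
      rw [ih k h1, ih (k + 1) h2]; ring

lemma key_sum (m r t : ℝ) (n : ℕ) :
    ∑ k ∈ Finset.range (n + 1),
      rWhitney m r n k * (t ^ (k + 1) + (k : ℝ) * m * t ^ k + r * t ^ k)
    = ∑ k ∈ Finset.range (n + 2), rWhitney m r (n + 1) k * t ^ k := by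
  have hR : ∑ k ∈ Finset.range (n + 2), rWhitney m r (n + 1) k * t ^ k
      = (∑ k ∈ Finset.range (n + 1), rWhitney m r (n + 1) (k + 1) * t ^ (k + 1))
        + rWhitney m r (n + 1) 0 * t ^ 0 := Finset.sum_range_succ' _ _
  rw [hR]
  have hW0 : rWhitney m r (n + 1) 0 = r * rWhitney m r n 0 := rfl
  have hWs : ∀ k, rWhitney m r (n + 1) (k + 1)
      = rWhitney m r n k + (m * (k + 1) + r) * rWhitney m r n (k + 1) := fun k => rfl
  -- split LHS
  have hL : ∑ k ∈ Finset.range (n + 1),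
      rWhitney m r n k * (t ^ (k + 1) + (k : ℝ) * m * t ^ k + r * t ^ k)
      = (∑ k ∈ Finset.range (n + 1), rWhitney m r n k * t ^ (k + 1))
        + ∑ k ∈ Finset.range (n + 1), rWhitney m r n k * (((k : ℝ) * m + r) * t ^ k) := by
    rw [← Finset.sum_add_distrib]
    exact Finset.sum_congr rfl fun k _ => by ring
  rw [hL]
  have hR2 : ∑ k ∈ Finset.range (n + 1), rWhitney m r (n + 1) (k + 1) * t ^ (k + 1)
      = (∑ k ∈ Finset.range (n + 1), rWhitney m r n k * t ^ (k + 1))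
        + ∑ k ∈ Finset.range (n + 1),
            (m * (k + 1) + r) * rWhitney m r n (k + 1) * t ^ (k + 1) := by
    rw [← Finset.sum_add_distrib]
    exact Finset.sum_congr rfl fun k _ => by rw [hWs k]; ring
  rw [hR2]
  have h2 : ∑ k ∈ Finset.range (n + 1), rWhitney m r n k * (((k : ℝ) * m + r) * t ^ k)
      = (∑ k ∈ Finset.range n,
          rWhitney m r n (k + 1) * ((((k : ℕ) + 1 : ℝ)) * m + r) * t ^ (k + 1))
        + r * rWhitney m r n 0 := by
    rw [Finset.sum_range_succ' (fun k => rWhitney m r n k * (((k : ℝ) * m + r) * t ^ k)) n]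
    congr 1
    · exact Finset.sum_congr rfl fun k _ => by push_cast; ring
    · push_cast; ring
  have h3 : ∑ k ∈ Finset.range (n + 1),
      (m * (k + 1) + r) * rWhitney m r n (k + 1) * t ^ (k + 1)
      = ∑ k ∈ Finset.range n,
          rWhitney m r n (k + 1) * ((((k : ℕ) + 1 : ℝ)) * m + r) * t ^ (k + 1) := by
    rw [Finset.sum_range_succ]
    rw [rWhitney_eq_zero m r n (n + 1) (by omega)]
    simp only [mul_zero, zero_mul, add_zero]
    exact Finset.sum_congr rfl fun k _ => by push_cast; ring
  rw [h2, h3, hW0]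
  ring

lemma iter_eq (m r : ℝ) (n : ℕ) :
    ((fun f : ℝ → ℝ => fun y => m * y * deriv f y + r * f y)^[n] Real.exp)
      = fun x => Real.exp x * rDowling m r n (m * x) := by
  induction n with
  | zero =>
    funext x
    simp [rDowling, rWhitney]
  | succ n ih =>
    funext x
    rw [Function.iterate_succ_apply', ih]
    -- derivative of the known function
    have hg : HasDerivAt (fun y => rDowling m r n (m * y))
        (∑ k ∈ Finset.range (n + 1),
          rWhitney m r n k * ((k : ℝ) * (m * x) ^ (k - 1) * (m * 1))) x := by
      unfold rDowling
      apply HasDerivAt.fun_sum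
      intro k _
      exact (((hasDerivAt_id x).const_mul m).pow k).const_mul (rWhitney m r n k)
    have hD : HasDerivAt (fun y => Real.exp y * rDowling m r n (m * y))
        (Real.exp x * rDowling m r n (m * x)
          + Real.exp x * ∑ k ∈ Finset.range (n + 1),
              rWhitney m r n k * ((k : ℝ) * (m * x) ^ (k - 1) * (m * 1))) x :=
      (Real.hasDerivAt_exp x).mul hg
    simp only
    rw [hD.deriv]
    -- reduce to a polynomial identity
    have hpoly :
        m * x * (rDowling m r n (m * x)
            + ∑ k ∈ Finset.range (n + 1),
                rWhitney m r n k * ((k : ℝ) * (m * x) ^ (k - 1) * (m * 1)))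
          + r * rDowling m r n (m * x)
        = rDowling m r (n + 1) (m * x) := by
      unfold rDowling
      have hS : m * x * ∑ k ∈ Finset.range (n + 1),
            rWhitney m r n k * ((k : ℝ) * (m * x) ^ (k - 1) * (m * 1))
          = ∑ k ∈ Finset.range (n + 1),
              rWhitney m r n k * ((k : ℝ) * m * (m * x) ^ k) := by
        rw [Finset.mul_sum]
        refine Finset.sum_congr rfl fun k _ => ?_
        rcases k with _ | j
        · simp
        · simp only [Nat.add_sub_cancel]
          push_cast
          ring
      have hT : m * x * ∑ k ∈ Finset.range (n + 1), rWhitney m r n k * (m * x) ^ k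
          = ∑ k ∈ Finset.range (n + 1), rWhitney m r n k * (m * x) ^ (k + 1) := by
        rw [Finset.mul_sum]
        exact Finset.sum_congr rfl fun k _ => by ring
      rw [mul_add, hS, hT, Finset.mul_sum, ← key_sum m r (m * x) n,
        ← Finset.sum_add_distrib, ← Finset.sum_add_distrib]
      exact Finset.sum_congr rfl fun k _ => by ring
    linear_combination Real.exp x * hpoly

theorem rWhitney_exp (n : ℕ) (m r x : ℝ) :
    Real.exp (-x) *
      ((fun f : ℝ → ℝ => fun y => m * y * deriv f y + r * f y)^[n] Real.exp) x =
    rDowling m r n (m * x) := by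
  rw [iter_eq]
  simp only
  rw [← mul_assoc, ← Real.exp_add]
  simp
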